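/- Let K be a field of characteristic 0, m an odd positive integer, and h ∈ K[x] a monic even polynomial (h(−x) = h(x)) of degree 2m without multiple roots and with h(0) ≠ 0. Let L be a splitting field of h over K and β₁,…,βₘ ∈ L be such that the roots of h are the 2m pairwise distinct elements ±β₁,…,±βₘ. Then (∏ᵢ βᵢ)² = −h(0); moreover every σ ∈ Gal(L/K) satisfies σ(∏ᵢβᵢ) = ±∏ᵢβᵢ, and the following are equivalent: (a) σ(∏ᵢ βᵢ) = ∏ᵢ βᵢ for every σ ∈ Gal(L/K); (b) −h(0) is a square in K. -/

import Mathlib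

/-- for a monic even squarefree polynomial `h` of degree `2m` (`m` odd) with
`h(0) ≠ 0`, whose roots in a splitting field `L` are the `2m` pairwise distinct elements
`±β₁, …, ±βₘ`, one has `(∏ᵢ βᵢ)² = -h(0)`; every `σ ∈ Gal(L/K)` sends `∏ᵢ βᵢ` to `±∏ᵢ βᵢ`;
and `∏ᵢ βᵢ` is Galois-invariant iff `-h(0)` is a square in `K`. -/
theorem statement9 (K : Type*) [Field K] [CharZero K] (m : ℕ) (hm0 : 0 < m) (hm : Odd m)
    (h : Polynomial K) (hmonic : h.Monic) (heven : ∀ j : ℕ, Odd j → h.coeff j = 0)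
    (hdeg : h.natDegree = 2 * m) (hsq : Squarefree h) (h0 : h.coeff 0 ≠ 0)
    (L : Type*) [Field L] [Algebra K L] [Polynomial.IsSplittingField K L h]
    (β : Fin m → L)
    (hroots : ∀ x : L, Polynomial.aeval x h = 0 ↔ ∃ i, x = β i ∨ x = -β i)
    (hinj : Function.Injective β) (hne : ∀ i j, β i ≠ -β j) :
    (∏ i, β i) ^ 2 = algebraMap K L (-(h.coeff 0)) ∧
    (∀ σ : L ≃ₐ[K] L, σ (∏ i, β i) = ∏ i, β i ∨ σ (∏ i, β i) = -∏ i, β i) ∧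
    ((∀ σ : L ≃ₐ[K] L, σ (∏ i, β i) = ∏ i, β i) ↔ ∃ c : K, c ^ 2 = -(h.coeff 0)) := by
  classical
  set f := algebraMap K L with hf
  set p := ∏ i, β i with hp
  have hne0 : h ≠ 0 := hmonic.ne_zero
  have hsplits : (h.map f).Splits := Polynomial.IsSplittingField.splits L h
  have hmap0 : h.map f ≠ 0 := (Polynomial.map_ne_zero_iff (algebraMap K L).injective).mpr hne0
  -- the roots multiset
  set M : Multiset L := (h.map f).roots with hM
  set S : Multiset L := Finset.univ.val.map β + Finset.univ.val.map (fun i => -β i) with hS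
  have hScard : Multiset.card S = 2 * m := by
    simp [hS, two_mul]
  have hMcard : Multiset.card M = 2 * m := by
    rw [hM, ← hsplits.natDegree_eq_card_roots, Polynomial.natDegree_map, hdeg]
  have hSnodup : S.Nodup := by
    rw [hS]
    rw [Multiset.nodup_add]
    refine ⟨Multiset.Nodup.map hinj Finset.univ.nodup,
      Multiset.Nodup.map (fun a b hab => hinj (neg_injective hab)) Finset.univ.nodup, ?_⟩
    rw [Multiset.disjoint_left]
    rintro x hx hy
    rw [Multiset.mem_map] at hx hy
    obtain ⟨i, _, rfl⟩ := hx
    obtain ⟨j, _, hj⟩ := hy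
    exact hne i j hj.symm
  have hSsub : S ≤ M := by
    refine (Multiset.le_iff_subset hSnodup).mpr ?_
    intro x hx
    rw [hM, Polynomial.mem_roots hmap0]
    have hx0 : Polynomial.aeval x h = 0 := by
      rw [hroots]
      simp only [hS, Multiset.mem_add, Multiset.mem_map] at hx
      rcases hx with ⟨i, _, rfl⟩ | ⟨i, _, rfl⟩
      · exact ⟨i, Or.inl rfl⟩
      · exact ⟨i, Or.inr rfl⟩
    rwa [Polynomial.IsRoot, Polynomial.eval_map, ← Polynomial.aeval_def]
  have hSM : S = M := Multiset.eq_of_le_of_card_le hSsub (by rw [hMcard, hScard])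
  have hnegprod : ∏ i, (-β i) = (-1 : L) ^ m * p := by
    calc ∏ i, (-β i) = ∏ i, ((-1 : L) * β i) := by simp
    _ = (∏ _i : Fin m, (-1 : L)) * ∏ i, β i := Finset.prod_mul_distrib
    _ = (-1 : L) ^ m * p := by simp [hp]
  have hprodM : M.prod = (-1 : L) ^ m * p ^ 2 := by
    rw [← hSM, hS, Multiset.prod_add, ← Finset.prod_eq_multiset_prod,
      ← Finset.prod_eq_multiset_prod, hnegprod, ← hp]
    ring
  -- evaluate at 0
  have key : f (h.coeff 0) = - p ^ 2 := by
    have heq := Polynomial.Splits.eq_prod_roots_of_monic hsplits (hmonic.map f)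
    have h5 := congrArg (Polynomial.eval 0) heq
    rw [Polynomial.eval_multiset_prod] at h5
    simp only [Multiset.map_map, Function.comp, Polynomial.eval_sub, Polynomial.eval_X,
      Polynomial.eval_C, zero_sub] at h5
    have h4 : f (h.coeff 0) = Polynomial.eval (0 : L) (h.map f) := by
      rw [Polynomial.eval_map, Polynomial.eval₂_at_zero]
    rw [h4, h5]
    have h6 : (Multiset.map (fun x => -x) M).prod
        = (-1 : L) ^ (Multiset.card M) * M.prod := Multiset.prod_map_neg M
    rw [h6, hMcard, hprodM, hm.neg_one_pow, pow_mul]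
    simp
  have part1 : p ^ 2 = f (-(h.coeff 0)) := by rw [map_neg, key, neg_neg]
  refine ⟨part1, ?_, ?_⟩
  · intro σ
    have hsq2 : (σ p) ^ 2 = p ^ 2 := by
      rw [← map_pow, part1]
      exact σ.commutes _
    have h2 : (σ p - p) * (σ p + p) = 0 := by linear_combination hsq2
    rcases mul_eq_zero.mp h2 with h3 | h3
    · exact Or.inl (sub_eq_zero.mp h3)
    · exact Or.inr (eq_neg_of_add_eq_zero_left h3)
  · have hsep : h.Separable := (PerfectField.separable_iff_squarefree).mpr hsq
    have hFD : FiniteDimensional K L := Polynomial.IsSplittingField.finiteDimensional L h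
    have hGal : IsGalois K L := IsGalois.of_separable_splitting_field hsep
    constructor
    · intro hfix
      have hbot : IntermediateField.fixedField (⊤ : Subgroup (L ≃ₐ[K] L)) =
          (⊥ : IntermediateField K L) := ((IsGalois.tfae (F := K) (E := L)).out 0 1).mp hGal
      have hmem : p ∈ IntermediateField.fixedField (⊤ : Subgroup (L ≃ₐ[K] L)) := by
        intro σ
        exact hfix σ
      rw [hbot, IntermediateField.mem_bot] at hmem
      obtain ⟨c, hc⟩ := hmem
      refine ⟨c, ?_⟩
      have hcc : f (c ^ 2) = f (-(h.coeff 0)) := by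
        rw [map_pow]
        rw [show (algebraMap K L) c = p from hc]
        exact part1
      exact (algebraMap K L).injective hcc
    · rintro ⟨c, hc⟩ σ
      have hc2 : (f c) ^ 2 = p ^ 2 := by rw [← map_pow, hc]; exact part1.symm
      have h2 : (p - f c) * (p + f c) = 0 := by linear_combination -hc2
      rcases mul_eq_zero.mp h2 with h3 | h3
      · rw [sub_eq_zero.mp h3]
        exact σ.commutes _
      · rw [eq_neg_of_add_eq_zero_left h3, map_neg]
        rw [show σ (f c) = f c from σ.commutes c]
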